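/- Let Z_1, …, Z_{n+1} be real-valued exchangeable random variables that are almost surely pairwise distinct. Then for every β ∈ [0,1], β ≤ P( Z_{n+1} ≤ Q_β(Z_1, …, Z_n, +∞) ) ≤ β + 1/(n+1), where the empirical quantile is computed over the n+1 values Z_1, …, Z_n together with +∞. -/

import Mathlib

open MeasureTheory

/-- Exchangeability: for every permutation `π`, the joint law of the permuted family
equals the joint law of the original family. -/
def Exchangeable {Ω : Type*} [MeasurableSpace Ω] (P : Measure Ω)
    {m : ℕ} {α : Type*} [MeasurableSpace α] (Z : Fin m → Ω → α) : Prop :=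
  ∀ π : Equiv.Perm (Fin m),
    Measure.map (fun ω => fun i => Z (π i) ω) P = Measure.map (fun ω => fun i => Z i ω) P

/-- Empirical `β`-quantile of extended-real values `z 1, …, z m`:
`inf { x ∈ ℝ : (1/m) · #{ i : z i ≤ x } ≥ β }`, with `inf ∅ = +∞` (in `EReal`). -/
noncomputable def empQuantile {m : ℕ} (z : Fin m → EReal) (β : ℝ) : EReal :=
  sInf ((fun r : ℝ => (r : EReal)) ''
    {r : ℝ | β ≤ ((Finset.univ.filter (fun i => z i ≤ (r : EReal))).card : ℝ) / m})

/-- The empirical `β`-quantile of the `n + 1` values `z 1, …, z n, +∞`. -/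
noncomputable def augQuantile {n : ℕ} (z : Fin n → ℝ) (β : ℝ) : EReal :=
  empQuantile (Fin.snoc (fun i => ((z i : ℝ) : EReal)) ⊤) β


open Finset
open scoped ENNReal

noncomputable def rnk {m : ℕ} (v : Fin m → ℝ) (j : Fin m) : ℕ :=
  (Finset.univ.filter (fun i => v i ≤ v j)).card

lemma rnk_lt_rnk {m : ℕ} {v : Fin m → ℝ} {j j' : Fin m} (h : v j < v j') :
    rnk v j < rnk v j' := by
  apply Finset.card_lt_card
  constructor
  · intro i hi
    simp only [mem_filter, mem_univ, true_and] at hi ⊢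
    exact hi.trans h.le
  · intro hsub
    have := hsub (by simp : j' ∈ univ.filter (fun i => v i ≤ v j'))
    simp only [mem_filter, mem_univ, true_and] at this
    exact absurd this (not_le.mpr h)

lemma rnk_injective {m : ℕ} {v : Fin m → ℝ} (hv : Function.Injective v) :
    Function.Injective (rnk v) := by
  intro j j' h
  rcases lt_trichotomy (v j) (v j') with hlt | heq | hgt
  · exact absurd h (rnk_lt_rnk hlt).ne
  · exact hv heq
  · exact absurd h.symm (rnk_lt_rnk hgt).ne

lemma one_le_rnk {m : ℕ} (v : Fin m → ℝ) (j : Fin m) : 1 ≤ rnk v j :=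
  Finset.card_pos.mpr ⟨j, by simp⟩

lemma rnk_le {m : ℕ} (v : Fin m → ℝ) (j : Fin m) : rnk v j ≤ m := by
  simpa [rnk] using Finset.card_filter_le Finset.univ (fun i => v i ≤ v j)

lemma rnk_comp_perm {m : ℕ} (v : Fin m → ℝ) (π : Equiv.Perm (Fin m)) (j : Fin m) :
    rnk (fun i => v (π i)) j = rnk v (π j) := by
  unfold rnk
  rw [Finset.card_filter, Finset.card_filter]
  exact Equiv.sum_comp π (fun i => if v i ≤ v (π j) then 1 else 0)

lemma snoc_card {n : ℕ} (z : Fin n → ℝ) (r : ℝ) :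
    (Finset.univ.filter
      (fun i => (Fin.snoc (fun i => ((z i : ℝ) : EReal)) ⊤ : Fin (n+1) → EReal) i ≤ (r : EReal))).card
    = (Finset.univ.filter (fun i : Fin n => z i ≤ r)).card := by
  rw [Finset.card_filter, Finset.card_filter, Fin.sum_univ_castSucc]
  simp [Fin.snoc, EReal.coe_le_coe_iff]

lemma quantile_iff {n : ℕ} (z : Fin n → ℝ) (t : ℝ) (β : ℝ) (ht : ∀ i, z i ≠ t) :
    (t : EReal) ≤ augQuantile z β ↔
      ((Finset.univ.filter (fun i : Fin n => z i ≤ t)).card : ℝ) / (n + 1) < β := by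
  have hpos : (0:ℝ) < (n:ℝ) + 1 := by positivity
  have hset : augQuantile z β = sInf ((fun r : ℝ => (r : EReal)) ''
      {r : ℝ | β ≤ ((Finset.univ.filter (fun i : Fin n => z i ≤ r)).card : ℝ) / (n+1)}) := by
    unfold augQuantile empQuantile
    congr 1
    ext x
    simp only [Set.mem_image, Set.mem_setOf_eq]
    constructor
    · rintro ⟨r, hr, rfl⟩
      exact ⟨r, by rw [snoc_card] at hr; push_cast at hr ⊢; exact hr, rfl⟩
    · rintro ⟨r, hr, rfl⟩
      exact ⟨r, by rw [snoc_card]; push_cast at hr ⊢; exact hr, rfl⟩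
  rw [hset]
  constructor
  · intro hle
    by_contra hcon
    push_neg at hcon
    obtain ⟨r, hrmem, hrt⟩ : ∃ r : ℝ,
        β ≤ ((Finset.univ.filter (fun i : Fin n => z i ≤ r)).card : ℝ) / (n+1) ∧ r < t := by
      have hsne : (insert (t - 1) ((Finset.univ.filter (fun i : Fin n => z i ≤ t)).image z)).Nonempty :=
        ⟨t - 1, Finset.mem_insert_self _ _⟩
      refine ⟨(insert (t - 1) ((Finset.univ.filter (fun i : Fin n => z i ≤ t)).image z)).max' hsne,
        ?_, ?_⟩
      · refine hcon.trans (div_le_div_of_nonneg_right ?_ hpos.le)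
        refine Nat.cast_le.mpr (Finset.card_le_card ?_)
        intro i hi
        simp only [Finset.mem_filter, Finset.mem_univ, true_and] at hi ⊢
        refine Finset.le_max' _ (z i) ?_
        exact Finset.mem_insert_of_mem (Finset.mem_image.mpr
          ⟨i, Finset.mem_filter.mpr ⟨Finset.mem_univ i, hi⟩, rfl⟩)
      · have hmem := Finset.max'_mem _ hsne
        rcases Finset.mem_insert.mp hmem with h1 | h2
        · rw [h1]; linarith
        · rcases Finset.mem_image.mp h2 with ⟨i, hi, hzi⟩
          rw [← hzi]
          exact lt_of_le_of_ne (Finset.mem_filter.mp hi).2 (ht i)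
    have h2 := hle.trans (sInf_le ⟨r, hrmem, rfl⟩)
    rw [EReal.coe_le_coe_iff] at h2
    linarith
  · intro hlt
    apply le_sInf
    rintro x ⟨r, hr, rfl⟩
    simp only [Set.mem_setOf_eq] at hr
    rw [EReal.coe_le_coe_iff]
    by_contra hcon
    push_neg at hcon
    have hle' : ((Finset.univ.filter (fun i : Fin n => z i ≤ r)).card : ℝ) ≤
        ((Finset.univ.filter (fun i : Fin n => z i ≤ t)).card : ℝ) := by
      refine Nat.cast_le.mpr (Finset.card_le_card ?_)
      intro i hi
      simp only [Finset.mem_filter, Finset.mem_univ, true_and] at hi ⊢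
      exact hi.trans hcon.le
    have : ((Finset.univ.filter (fun i : Fin n => z i ≤ r)).card : ℝ) / (n+1) ≤
        ((Finset.univ.filter (fun i : Fin n => z i ≤ t)).card : ℝ) / (n+1) :=
      div_le_div_of_nonneg_right hle' hpos.le
    linarith [hr.trans this]

lemma rnk_image {n : ℕ} {v : Fin (n+1) → ℝ} (hv : Function.Injective v) :
    Finset.univ.image (rnk v) = Finset.Icc 1 (n+1) := by
  apply Finset.eq_of_subset_of_card_le
  · intro m hm
    rcases Finset.mem_image.mp hm with ⟨j, _, rfl⟩
    exact Finset.mem_Icc.mpr ⟨one_le_rnk v j, rnk_le v j⟩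
  · rw [Nat.card_Icc, Finset.card_image_of_injective _ (rnk_injective hv)]
    simp

lemma count_rank {n : ℕ} {v : Fin (n+1) → ℝ} (hv : Function.Injective v) (c : ℝ) :
    (Finset.univ.filter (fun j => (rnk v j : ℝ) < c)).card =
      ((Finset.Icc 1 (n+1)).filter (fun m : ℕ => (m : ℝ) < c)).card := by
  rw [← rnk_image hv, Finset.filter_image,
    Finset.card_image_of_injective _ (rnk_injective hv)]

lemma K_bounds {n : ℕ} {x : ℝ} (hx0 : 0 ≤ x) (hx1 : x ≤ n + 1) :
    x ≤ (((Finset.Icc 1 (n+1)).filter (fun m : ℕ => (m : ℝ) < x + 1)).card : ℝ) ∧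
    ((((Finset.Icc 1 (n+1)).filter (fun m : ℕ => (m : ℝ) < x + 1)).card : ℝ)) ≤ x + 1 := by
  have hceil0 : (0:ℤ) ≤ ⌈x⌉ := Int.ceil_nonneg hx0
  constructor
  · have hsub : Finset.Icc 1 (min (n+1) ⌈x⌉.toNat) ⊆
        (Finset.Icc 1 (n+1)).filter (fun m : ℕ => (m : ℝ) < x + 1) := by
      intro m hm
      rcases Finset.mem_Icc.mp hm with ⟨h1, h2⟩
      refine Finset.mem_filter.mpr ⟨Finset.mem_Icc.mpr ⟨h1, h2.trans (min_le_left _ _)⟩, ?_⟩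
      have hm2 : m ≤ ⌈x⌉.toNat := h2.trans (min_le_right _ _)
      have : ((m:ℤ) - 1) < ⌈x⌉ := by
        have h5 : ((m:ℤ)) ≤ ((⌈x⌉.toNat : ℤ)) := by exact_mod_cast hm2
        have : (m:ℤ) ≤ ⌈x⌉ := h5.trans (le_of_eq (by exact_mod_cast Int.toNat_of_nonneg hceil0))
        omega
      have := Int.lt_ceil.mp this
      push_cast at this
      linarith
    have hcard := Finset.card_le_card hsub
    rw [Nat.card_Icc] at hcard
    simp only [Nat.add_sub_cancel] at hcard
    have : x ≤ (min (n+1) ⌈x⌉.toNat : ℕ) := by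
      rw [Nat.cast_min]
      refine le_min (by push_cast; linarith) ?_
      have : (⌈x⌉ : ℝ) ≤ ((⌈x⌉.toNat : ℤ) : ℝ) := by exact_mod_cast Int.self_le_toNat ⌈x⌉
      push_cast at this ⊢
      linarith [Int.le_ceil x]
    exact this.trans (by exact_mod_cast hcard)
  · have hsub : (Finset.Icc 1 (n+1)).filter (fun m : ℕ => (m : ℝ) < x + 1) ⊆
        Finset.Icc 1 ⌈x⌉.toNat := by
      intro m hm
      rcases Finset.mem_filter.mp hm with ⟨h1, h2⟩
      rcases Finset.mem_Icc.mp h1 with ⟨h3, _⟩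
      refine Finset.mem_Icc.mpr ⟨h3, ?_⟩
      have : ((m:ℤ) - 1 : ℝ) < x := by push_cast; linarith
      have hlt : (m:ℤ) - 1 < ⌈x⌉ := Int.lt_ceil.mpr (by exact_mod_cast this)
      omega
    have hcard := Finset.card_le_card hsub
    rw [Nat.card_Icc] at hcard
    simp only [Nat.add_sub_cancel] at hcard
    have h1 : ((⌈x⌉.toNat : ℕ) : ℝ) = ((⌈x⌉ : ℤ) : ℝ) := by
      exact_mod_cast congrArg (fun z : ℤ => (z : ℝ)) (Int.toNat_of_nonneg hceil0)
    calc ((((Finset.Icc 1 (n+1)).filter (fun m : ℕ => (m : ℝ) < x + 1)).card : ℝ))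
        ≤ ((⌈x⌉.toNat : ℕ) : ℝ) := by exact_mod_cast hcard
      _ = (⌈x⌉ : ℝ) := h1
      _ ≤ x + 1 := (Int.ceil_lt_add_one x).le

theorem stmt0 {Ω : Type*} [MeasurableSpace Ω] (P : Measure Ω) [IsProbabilityMeasure P]
    (n : ℕ) (Z : Fin (n + 1) → Ω → ℝ) (hmeas : ∀ i, Measurable (Z i))
    (hexch : Exchangeable P Z)
    (hdist : ∀ᵐ ω ∂P, ∀ i j : Fin (n + 1), i ≠ j → Z i ω ≠ Z j ω)
    (β : ℝ) (hβ0 : 0 ≤ β) (hβ1 : β ≤ 1) :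
    ENNReal.ofReal β ≤
        P {ω | (Z (Fin.last n) ω : EReal) ≤
            augQuantile (fun i : Fin n => Z (Fin.castSucc i) ω) β} ∧
      P {ω | (Z (Fin.last n) ω : EReal) ≤
            augQuantile (fun i : Fin n => Z (Fin.castSucc i) ω) β} ≤
        ENNReal.ofReal (β + 1 / (n + 1)) := by
  classical
  have hnpos : (0:ℝ) < (n:ℝ) + 1 := by positivity
  set c : ℝ := β * ((n:ℝ) + 1) + 1 with hc
  set V : Ω → (Fin (n+1) → ℝ) := fun ω i => Z i ω with hV
  have hVmeas : Measurable V := measurable_pi_lambda _ hmeas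
  set B : Fin (n+1) → Set (Fin (n+1) → ℝ) :=
    fun j => {v | (rnk v j : ℝ) < c} with hB
  have hrnkmeas : ∀ j, Measurable fun v : Fin (n+1) → ℝ => (rnk v j : ℝ) := by
    intro j
    have : (fun v : Fin (n+1) → ℝ => (rnk v j : ℝ)) =
        fun v => ∑ i : Fin (n+1), if v i ≤ v j then (1:ℝ) else 0 := by
      funext v
      rw [rnk, Finset.card_filter]
      push_cast
      rfl
    rw [this]
    exact Finset.measurable_sum _ (fun i _ =>
      Measurable.ite (measurableSet_le (measurable_pi_apply i) (measurable_pi_apply j))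
        measurable_const measurable_const)
  have hBmeas : ∀ j, MeasurableSet (B j) :=
    fun j => measurableSet_lt (hrnkmeas j) measurable_const
  -- all B j have the same probability
  have hBeq : ∀ j, P (V ⁻¹' B j) = P (V ⁻¹' B (Fin.last n)) := by
    intro j
    set π : Equiv.Perm (Fin (n+1)) := Equiv.swap (Fin.last n) j with hπ
    have hW : Measurable (fun ω => fun i => Z (π i) ω) :=
      measurable_pi_lambda _ (fun i => hmeas (π i))
    have hpre : (fun ω => fun i => Z (π i) ω) ⁻¹' (B (Fin.last n)) = V ⁻¹' B j := by
      ext ω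
      simp only [Set.mem_preimage, hB, Set.mem_setOf_eq]
      have h1 : (fun i => Z (π i) ω) = (fun i => V ω (π i)) := rfl
      rw [h1, rnk_comp_perm (V ω) π (Fin.last n)]
      have : π (Fin.last n) = j := Equiv.swap_apply_left _ _
      rw [this]
    calc P (V ⁻¹' B j) = P ((fun ω => fun i => Z (π i) ω) ⁻¹' (B (Fin.last n))) := by
          rw [hpre]
      _ = (Measure.map (fun ω => fun i => Z (π i) ω) P) (B (Fin.last n)) :=
          (Measure.map_apply hW (hBmeas (Fin.last n))).symm
      _ = (Measure.map V P) (B (Fin.last n)) := by rw [hexch π]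
      _ = P (V ⁻¹' B (Fin.last n)) := Measure.map_apply hVmeas (hBmeas (Fin.last n))
  -- the event equals V ⁻¹' B (last) a.e.
  have hEae : {ω | (Z (Fin.last n) ω : EReal) ≤
      augQuantile (fun i : Fin n => Z (Fin.castSucc i) ω) β} =ᵐ[P] V ⁻¹' B (Fin.last n) := by
    rw [Filter.eventuallyEq_set]
    filter_upwards [hdist] with ω hω
    have ht : ∀ i : Fin n, Z (Fin.castSucc i) ω ≠ Z (Fin.last n) ω :=
      fun i => hω _ _ (Fin.castSucc_lt_last i).ne
    have hrnk : (rnk (V ω) (Fin.last n) : ℝ) =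
        ((Finset.univ.filter (fun i : Fin n => Z (Fin.castSucc i) ω ≤ Z (Fin.last n) ω)).card : ℝ)
          + 1 := by
      rw [rnk, Finset.card_filter, Fin.sum_univ_castSucc, ← Finset.card_filter]
      simp [hV]
    simp only [Set.mem_setOf_eq, Set.mem_preimage, hB]
    rw [quantile_iff _ _ _ ht, hrnk]
    rw [div_lt_iff₀ hnpos]
    constructor <;> intro h <;> [skip; skip] <;> rw [hc] at * <;> linarith
  have hPE : P {ω | (Z (Fin.last n) ω : EReal) ≤
      augQuantile (fun i : Fin n => Z (Fin.castSucc i) ω) β} = P (V ⁻¹' B (Fin.last n)) :=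
    measure_congr hEae
  -- counting: sum of the probabilities equals K
  set K : ℕ := ((Finset.Icc 1 (n+1)).filter (fun m : ℕ => (m : ℝ) < c)).card with hK
  have hsum : ∑ j : Fin (n+1), P (V ⁻¹' B j) = (K : ℝ≥0∞) := by
    have h1 : ∀ j : Fin (n+1), P (V ⁻¹' B j) =
        ∫⁻ ω, (V ⁻¹' B j).indicator (1 : Ω → ℝ≥0∞) ω ∂P := by
      intro j
      rw [lintegral_indicator_one (hVmeas (hBmeas j))]
    rw [Finset.sum_congr rfl (fun j _ => h1 j), ← lintegral_finset_sum]
    · have h2 : ∫⁻ ω, ∑ j : Fin (n+1), (V ⁻¹' B j).indicator (1 : Ω → ℝ≥0∞) ω ∂P =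
          ∫⁻ _, (K : ℝ≥0∞) ∂P := by
        apply lintegral_congr_ae
        filter_upwards [hdist] with ω hω
        have hinj : Function.Injective (V ω) := by
          intro i i' hii
          by_contra hne
          exact hω i i' hne hii
        have h3 : ∀ j : Fin (n+1), (V ⁻¹' B j).indicator (1 : Ω → ℝ≥0∞) ω =
            if (rnk (V ω) j : ℝ) < c then 1 else 0 := by
          intro j
          rw [Set.indicator_apply]
          simp [hB]
        rw [Finset.sum_congr rfl (fun j _ => h3 j)]
        rw [← count_rank hinj c] at hK
        rw [hK]
        rw [Finset.card_filter]
        push_cast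
        rfl
      rw [h2, lintegral_const, measure_univ, mul_one]
    · exact fun j _ => (measurable_one.indicator (hVmeas (hBmeas j)))
  -- hence (n+1) * P(E) = K
  have hcount : ((n:ℝ≥0∞) + 1) * P (V ⁻¹' B (Fin.last n)) = (K : ℝ≥0∞) := by
    rw [← hsum, Finset.sum_congr rfl (fun j _ => hBeq j), Finset.sum_const, Finset.card_univ,
      Fintype.card_fin, nsmul_eq_mul]
    push_cast
    ring
  have hne1 : ((n:ℝ≥0∞) + 1) ≠ 0 := by simp
  have hne2 : ((n:ℝ≥0∞) + 1) ≠ ⊤ := by simp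
  have hPeq : P (V ⁻¹' B (Fin.last n)) = (K : ℝ≥0∞) / ((n:ℝ≥0∞) + 1) :=
    (ENNReal.eq_div_iff hne1 hne2).mpr hcount
  -- real-number bounds on K
  have hx0 : (0:ℝ) ≤ β * ((n:ℝ) + 1) := by positivity
  have hx1 : β * ((n:ℝ) + 1) ≤ (n:ℝ) + 1 := by nlinarith
  obtain ⟨hKlo, hKhi⟩ := K_bounds (n := n) hx0 (by push_cast; linarith)
  have hKc : (K : ℝ) = (((Finset.Icc 1 (n+1)).filter
      (fun m : ℕ => (m : ℝ) < β * ((n:ℝ) + 1) + 1)).card : ℝ) := by rw [hK, hc]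
  -- convert P(E) to ofReal form
  have hofReal : (K : ℝ≥0∞) / ((n:ℝ≥0∞) + 1) = ENNReal.ofReal ((K : ℝ) / ((n:ℝ) + 1)) := by
    rw [ENNReal.ofReal_div_of_pos hnpos]
    congr 1
    · exact (ENNReal.ofReal_natCast K).symm
    · rw [← ENNReal.ofReal_natCast n, ← ENNReal.ofReal_one, ← ENNReal.ofReal_add
        (by positivity) (by norm_num)]
  rw [hPE, hPeq, hofReal]
  constructor
  · apply ENNReal.ofReal_le_ofReal
    rw [le_div_iff₀ hnpos]
    calc β * ((n:ℝ) + 1) ≤ (K:ℝ) := by rw [hKc]; exact hKlo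
      _ = _ := rfl
  · apply ENNReal.ofReal_le_ofReal
    rw [div_le_iff₀ hnpos]
    have : (β + 1 / ((n:ℝ) + 1)) * ((n:ℝ) + 1) = β * ((n:ℝ)+1) + 1 := by
      field_simp
    rw [this]
    calc (K:ℝ) ≤ β * ((n:ℝ) + 1) + 1 := by rw [hKc]; exact hKhi
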